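/- Let N be a 3-prime zero-symmetric left near-ring and d a nonzero multiplicative derivation of N. If a ∈ N satisfies d(x)·a = 0 for all x ∈ N, then a = 0. -/
import Mathlib


class LeftNearRing (N : Type*) extends AddGroup N, Mul N where
  mul_assoc : ∀ a b c : N, a * b * c = a * (b * c)
  left_distrib : ∀ a b c : N, a * (b + c) = a * b + a * c

theorem stmt3 {N : Type*} [LeftNearRing N]
    (hzs : ∀ x : N, 0 * x = 0)
    (hp : ∀ a b : N, (∀ n : N, a * n * b = 0) → a = 0 ∨ b = 0)
    (d : N → N) (hd : ∀ x y : N, d (x * y) = x * d y + d x * y)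
    (hd0 : ∃ x : N, d x ≠ 0)
    (a : N) (ha : ∀ x : N, d x * a = 0) : a = 0 := by
  obtain ⟨x, hx⟩ := hd0
  have hmul0 : ∀ u : N, u * (0 : N) = 0 := by
    intro u
    have h := LeftNearRing.left_distrib u (0 : N) 0
    rw [add_zero] at h
    have h2 : u * 0 + u * 0 = u * 0 + 0 := by rw [add_zero]; exact h.symm
    exact add_left_cancel h2
  -- partial distributivity: (p * d q + d p * q) * r = p * (d q * r) + d p * q * r
  have hpd : ∀ p q r : N, (p * d q + d p * q) * r = p * (d q * r) + d p * q * r := by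
    intro p q r
    have h1 := hd (p * q) r
    have h2 := hd p (q * r)
    rw [hd q r, LeftNearRing.left_distrib, ← LeftNearRing.mul_assoc p q (d r)] at h2
    rw [← LeftNearRing.mul_assoc p q r] at h2
    rw [h2] at h1
    -- h1 : p*q*d r + (p*(d q * r) + d p * (q*r)) = p*q*d r + d (p*q) * r
    rw [add_assoc] at h1
    have h3 : p * (d q * r) + d p * (q * r) = d (p * q) * r := add_left_cancel h1
    rw [hd p q] at h3
    rw [← h3, LeftNearRing.mul_assoc]
  have key : ∀ n : N, d x * n * a = 0 := by
    intro n
    have h0 := ha (x * n)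
    rw [hd, hpd, ha n, hmul0, zero_add] at h0
    exact h0
  rcases hp (d x) a key with h | h
  · exact absurd h hx
  · exact h
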